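/- Let A be a finite set of actions, fix c ∈ (0,1], and work on a filtered probability space (Ω, F, (F_t)_{t∈ℕ₀}, ℙ). Let (x_{t+1}(a))_{a∈A}, t ∈ ℕ₀, be [0,1]-valued F_{t+1}-measurable payoffs, let A* := { a ∈ A : E_t[x_{t+1}(a)] ≥ E_t[x_{t+1}(b)] almost surely for all b ∈ A and all t ∈ ℕ₀ }, and suppose inf_{t∈ℕ₀} min_{a∈A*, b∈A∖A*} ( E_t[x_{t+1}(a)] − E_t[x_{t+1}(b)] ) > 0 almost surely. Let σ₀ ∈ Δ(A) with Σ_{a∈A*} σ₀(a) > 0 and define recursively σ_{t+1}(a) := σ_t(a) + σ_t(a)·Σ_{b∈A∖{a}} σ_t(b)·(c/(t+2))·( x_{t+1}(a) − x_{t+1}(b) ). Then σ_t ∈ Δ(A) for all t and Σ_{a∈A*} σ_t(a) → 1 almost surely as t → ∞. -/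

import Mathlib

open MeasureTheory Filter Set
open Topology

lemma aux_antisym {A : Type*} [DecidableEq A] (s : Finset A) (f : A → A → ℝ)
    (hf : ∀ a b, f a b = - f b a) : ∑ a ∈ s, ∑ b ∈ s, f a b = 0 := by
  have h1 : ∑ a ∈ s, ∑ b ∈ s, f a b = ∑ a ∈ s, ∑ b ∈ s, f b a := Finset.sum_comm
  have h2 : ∑ a ∈ s, ∑ b ∈ s, f b a = - ∑ a ∈ s, ∑ b ∈ s, f a b := by
    rw [← Finset.sum_neg_distrib]
    exact Finset.sum_congr rfl fun a _ => by
      rw [← Finset.sum_neg_distrib]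
      exact Finset.sum_congr rfl fun b _ => by rw [hf b a]
  linarith [h1, h2]

lemma aux_antisym_erase {A : Type*} [DecidableEq A] (s : Finset A) (f : A → A → ℝ)
    (hf : ∀ a b, f a b = - f b a) : ∑ a ∈ s, ∑ b ∈ s.erase a, f a b = 0 := by
  have hdiag : ∀ a, f a a = 0 := fun a => by have := hf a a; linarith
  have : ∀ a ∈ s, ∑ b ∈ s.erase a, f a b = ∑ b ∈ s, f a b - f a a :=
    fun a ha => Finset.sum_erase_eq_sub ha
  rw [Finset.sum_congr rfl this]
  simp [hdiag, aux_antisym s f hf]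

lemma aux_log {u : ℝ} (hu : |u| ≤ 1/2) : u - 2*u^2 ≤ Real.log (1+u) := by
  have h1 : (0:ℝ) < 1 + u := by
    have := abs_le.1 hu; linarith [this.1]
  have h2 : 1 - (1+u)⁻¹ ≤ Real.log (1+u) := Real.one_sub_inv_le_log_of_pos h1
  have h3 : u - 2*u^2 ≤ 1 - (1+u)⁻¹ := by
    have := abs_le.1 hu
    rw [sub_le_sub_iff, ← sub_le_iff_le_add']
    have hinv : (1+u) * (1+u)⁻¹ = 1 := mul_inv_cancel₀ (ne_of_gt h1)
    nlinarith [sq_nonneg u, this.1, mul_pos h1 (inv_pos.2 h1)]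
  linarith

theorem stmt13 {Ω : Type*} {mΩ : MeasurableSpace Ω}
    {μ : Measure Ω} [IsProbabilityMeasure μ] (𝓕 : Filtration ℕ mΩ)
    {A : Type*} [Fintype A] [DecidableEq A]
    (c : ℝ) (hc : c ∈ Set.Ioc (0 : ℝ) 1)
    (x : ℕ → A → Ω → ℝ)
    (hx_meas : ∀ (t : ℕ) (a : A), StronglyMeasurable[𝓕 (t + 1)] (x (t + 1) a))
    (hx_mem : ∀ (t : ℕ) (a : A) (ω : Ω), x (t + 1) a ω ∈ Set.Icc (0 : ℝ) 1)
    (hx_int : ∀ (t : ℕ) (a : A), Integrable (x (t + 1) a) μ)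
    (Astar : Finset A)
    (hAstar : ∀ a : A, a ∈ Astar ↔ ∀ (b : A) (t : ℕ),
      ∀ᵐ ω ∂μ, (μ[x (t + 1) b|𝓕 t]) ω ≤ (μ[x (t + 1) a|𝓕 t]) ω)
    (ε : Ω → ℝ) (hε_meas : Measurable ε) (hε_pos : ∀ᵐ ω ∂μ, 0 < ε ω)
    (hgap : ∀ t : ℕ, ∀ a ∈ Astar, ∀ b ∉ Astar, ∀ᵐ ω ∂μ,
      ε ω ≤ (μ[x (t + 1) a|𝓕 t]) ω - (μ[x (t + 1) b|𝓕 t]) ω)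
    (σ₀ : A → ℝ) (hσ₀_nonneg : ∀ a, 0 ≤ σ₀ a) (hσ₀_sum : ∑ a, σ₀ a = 1)
    (hP0 : 0 < ∑ a ∈ Astar, σ₀ a)
    (σ : ℕ → A → Ω → ℝ)
    (hσ_meas : ∀ (t : ℕ) (a : A), StronglyMeasurable[𝓕 t] (σ t a))
    (hσ_init : ∀ (a : A) (ω : Ω), σ 0 a ω = σ₀ a)
    (hrec : ∀ (t : ℕ) (a : A) (ω : Ω), σ (t + 1) a ω =
      σ t a ω + σ t a ω * ∑ b ∈ Finset.univ.erase a,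
        σ t b ω * ((c / ((t : ℝ) + 2)) * (x (t + 1) a ω - x (t + 1) b ω))) :
    (∀ (t : ℕ) (ω : Ω), (∀ a, 0 ≤ σ t a ω) ∧ ∑ a, σ t a ω = 1) ∧
    ∀ᵐ ω ∂μ, Tendsto (fun t => ∑ a ∈ Astar, σ t a ω) atTop (nhds 1) := by
  classical
  obtain ⟨hc0, hc1⟩ := hc
  set β : ℕ → ℝ := fun t => c / ((t : ℝ) + 2) with hβ
  have hβpos : ∀ t, 0 < β t := fun t =>
    div_pos hc0 (by positivity)
  have hβhalf : ∀ t, β t ≤ 1/2 := by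
    intro t
    show c / ((t:ℝ)+2) ≤ 1/2
    have h2 : (0:ℝ) < (t:ℝ) + 2 := by positivity
    rw [div_le_div_iff₀ h2 (by norm_num : (0:ℝ) < 2)]
    have : (0:ℝ) ≤ (t:ℝ) := Nat.cast_nonneg t
    linarith
  have hrec' : ∀ (t : ℕ) (a : A) (ω : Ω), σ (t + 1) a ω =
      σ t a ω + σ t a ω * ∑ b ∈ Finset.univ.erase a,
        σ t b ω * (β t * (x (t + 1) a ω - x (t + 1) b ω)) := hrec
  -- deterministic part
  have key : ∀ (t : ℕ) (ω : Ω), (∀ a, 0 ≤ σ t a ω) ∧ ∑ a, σ t a ω = 1 := by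
    intro t
    induction t with
    | zero => intro ω; simp only [hσ_init]; exact ⟨hσ₀_nonneg, hσ₀_sum⟩
    | succ t ih =>
      intro ω
      obtain ⟨hnn, hsum⟩ := ih ω
      have herase : ∀ a : A, ∑ b ∈ Finset.univ.erase a, σ t b ω ≤ 1 := by
        intro a
        rw [← hsum]
        exact Finset.sum_le_sum_of_subset_of_nonneg (Finset.erase_subset _ _)
          (fun b _ _ => hnn b)
      constructor
      · intro a
        rw [hrec']
        have hS : |∑ b ∈ Finset.univ.erase a, σ t b ω *
            (β t * (x (t + 1) a ω - x (t + 1) b ω))| ≤ 1/2 := by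
          calc |∑ b ∈ Finset.univ.erase a, σ t b ω *
              (β t * (x (t + 1) a ω - x (t + 1) b ω))|
              ≤ ∑ b ∈ Finset.univ.erase a, |σ t b ω *
                (β t * (x (t + 1) a ω - x (t + 1) b ω))| :=
                Finset.abs_sum_le_sum_abs _ _
            _ ≤ ∑ b ∈ Finset.univ.erase a, σ t b ω * (1/2) := by
                apply Finset.sum_le_sum
                intro b _
                rw [abs_mul, abs_mul, abs_of_nonneg (hnn b),
                  abs_of_nonneg (hβpos t).le]
                have hxa := hx_mem t a ω
                have hxb := hx_mem t b ω
                simp only [Set.mem_Icc] at hxa hxb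
                have : |x (t + 1) a ω - x (t + 1) b ω| ≤ 1 := by
                  rw [abs_le]; constructor <;> linarith [hxa.1, hxa.2, hxb.1, hxb.2]
                have hb2 := hβhalf t
                have h1 : β t * |x (t + 1) a ω - x (t + 1) b ω| ≤ 1/2 := by
                  nlinarith [abs_nonneg (x (t + 1) a ω - x (t + 1) b ω), (hβpos t).le]
                exact mul_le_mul_of_nonneg_left h1 (hnn b)
            _ ≤ 1/2 := by
                rw [← Finset.sum_mul]
                nlinarith [herase a]
        nlinarith [hnn a, abs_le.1 hS]
      · have hexp : ∑ a, σ (t+1) a ω = (∑ a, σ t a ω) +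
            ∑ a, ∑ b ∈ Finset.univ.erase a,
              σ t a ω * (σ t b ω * (β t * (x (t + 1) a ω - x (t + 1) b ω))) := by
          rw [← Finset.sum_add_distrib]
          exact Finset.sum_congr rfl fun a _ => by rw [hrec' t a ω, Finset.mul_sum]
        rw [hexp, hsum, aux_antisym_erase]
        · ring
        · intro a b; ring
  refine ⟨key, ?_⟩
  -- probability part
  set P : ℕ → Ω → ℝ := fun t ω => ∑ a ∈ Astar, σ t a ω with hPdef
  set D : ℕ → Ω → ℝ := fun t ω => ∑ p ∈ Astar ×ˢ (Finset.univ \ Astar),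
    σ t p.1 ω * σ t p.2 ω * (x (t+1) p.1 ω - x (t+1) p.2 ω) with hDdef
  have hPnonneg : ∀ t ω, 0 ≤ P t ω := fun t ω =>
    Finset.sum_nonneg fun a _ => (key t ω).1 a
  have hPle1 : ∀ t ω, P t ω ≤ 1 := by
    intro t ω
    show ∑ a ∈ Astar, σ t a ω ≤ 1
    rw [← (key t ω).2]
    exact Finset.sum_le_sum_of_subset_of_nonneg (Finset.subset_univ _)
      fun b _ _ => (key t ω).1 b
  have hQ : ∀ t ω, ∑ b ∈ Finset.univ \ Astar, σ t b ω = 1 - P t ω := by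
    intro t ω
    have h := Finset.sum_sdiff (f := fun b => σ t b ω) (Finset.subset_univ Astar)
    have h2 := (key t ω).2
    show _ = 1 - ∑ a ∈ Astar, σ t a ω
    linarith [h, h2]
  have hPQ : ∀ t ω, ∑ p ∈ Astar ×ˢ (Finset.univ \ Astar), σ t p.1 ω * σ t p.2 ω
      = P t ω * (1 - P t ω) := by
    intro t ω
    rw [Finset.sum_product, ← hQ t ω]
    show _ = (∑ a ∈ Astar, σ t a ω) * _
    rw [Finset.sum_mul_sum]
  have hPrec : ∀ t ω, P (t+1) ω = P t ω + β t * D t ω := by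
    intro t ω
    have hsplit : ∀ a ∈ Astar, ∀ g : A → ℝ,
        ∑ b ∈ Finset.univ.erase a, g b
          = ∑ b ∈ Astar.erase a, g b + ∑ b ∈ Finset.univ \ Astar, g b := by
      intro a ha g
      have hdisj : Disjoint (Astar.erase a) (Finset.univ \ Astar) := by
        rw [Finset.disjoint_left]
        intro b hb hb2
        rw [Finset.mem_sdiff] at hb2
        exact hb2.2 (Finset.mem_of_mem_erase hb)
      rw [← Finset.sum_union hdisj]
      apply Finset.sum_congr _ fun _ _ => rfl
      ext b
      simp only [Finset.mem_erase, Finset.mem_union, Finset.mem_sdiff, Finset.mem_univ,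
        true_and, and_true]
      constructor
      · intro hba
        by_cases hbA : b ∈ Astar
        · exact Or.inl ⟨hba, hbA⟩
        · exact Or.inr hbA
      · rintro (⟨hba, _⟩ | hbA)
        · exact hba
        · intro h; exact hbA (h ▸ ha)
    have e1 : ∑ a ∈ Astar, σ (t+1) a ω
        = (∑ a ∈ Astar, σ t a ω)
          + ∑ a ∈ Astar, ∑ b ∈ Finset.univ.erase a,
              σ t a ω * (σ t b ω * (β t * (x (t+1) a ω - x (t+1) b ω))) := by
      rw [← Finset.sum_add_distrib]
      exact Finset.sum_congr rfl fun a _ => by rw [hrec' t a ω, Finset.mul_sum]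
    have e2 : ∑ a ∈ Astar, ∑ b ∈ Finset.univ.erase a,
          σ t a ω * (σ t b ω * (β t * (x (t+1) a ω - x (t+1) b ω)))
        = (∑ a ∈ Astar, ∑ b ∈ Astar.erase a,
            σ t a ω * (σ t b ω * (β t * (x (t+1) a ω - x (t+1) b ω))))
          + ∑ a ∈ Astar, ∑ b ∈ Finset.univ \ Astar,
            σ t a ω * (σ t b ω * (β t * (x (t+1) a ω - x (t+1) b ω))) := by
      rw [← Finset.sum_add_distrib]
      exact Finset.sum_congr rfl fun a ha => hsplit a ha _
    have e3 : ∑ a ∈ Astar, ∑ b ∈ Astar.erase a,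
        σ t a ω * (σ t b ω * (β t * (x (t+1) a ω - x (t+1) b ω))) = 0 := by
      apply aux_antisym_erase
      intro a b; ring
    have e4 : ∑ a ∈ Astar, ∑ b ∈ Finset.univ \ Astar,
        σ t a ω * (σ t b ω * (β t * (x (t+1) a ω - x (t+1) b ω))) = β t * D t ω := by
      show _ = β t * ∑ p ∈ Astar ×ˢ (Finset.univ \ Astar),
        σ t p.1 ω * σ t p.2 ω * (x (t+1) p.1 ω - x (t+1) p.2 ω)
      rw [Finset.mul_sum, Finset.sum_product]
      exact Finset.sum_congr rfl fun a _ => Finset.sum_congr rfl fun b _ => by ring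
    show ∑ a ∈ Astar, σ (t+1) a ω = _
    rw [e1, e2, e3, e4]
    show _ = (∑ a ∈ Astar, σ t a ω) + β t * D t ω
    ring
  have hDabs : ∀ t ω, |D t ω| ≤ P t ω * (1 - P t ω) := by
    intro t ω
    rw [← hPQ t ω]
    show |∑ p ∈ Astar ×ˢ (Finset.univ \ Astar),
      σ t p.1 ω * σ t p.2 ω * (x (t+1) p.1 ω - x (t+1) p.2 ω)| ≤ _
    calc |∑ p ∈ Astar ×ˢ (Finset.univ \ Astar),
        σ t p.1 ω * σ t p.2 ω * (x (t+1) p.1 ω - x (t+1) p.2 ω)|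
        ≤ ∑ p ∈ Astar ×ˢ (Finset.univ \ Astar),
          |σ t p.1 ω * σ t p.2 ω * (x (t+1) p.1 ω - x (t+1) p.2 ω)| :=
          Finset.abs_sum_le_sum_abs _ _
      _ ≤ ∑ p ∈ Astar ×ˢ (Finset.univ \ Astar), σ t p.1 ω * σ t p.2 ω := by
          apply Finset.sum_le_sum
          rintro ⟨a, b⟩ _
          rw [abs_mul, abs_of_nonneg (mul_nonneg ((key t ω).1 a) ((key t ω).1 b))]
          have hxa := hx_mem t a ω
          have hxb := hx_mem t b ω
          simp only [Set.mem_Icc] at hxa hxb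
          have hd : |x (t + 1) a ω - x (t + 1) b ω| ≤ 1 := by
            rw [abs_le]; constructor <;> linarith [hxa.1, hxa.2, hxb.1, hxb.2]
          nlinarith [mul_nonneg ((key t ω).1 a) ((key t ω).1 b),
            abs_nonneg (x (t + 1) a ω - x (t + 1) b ω)]
  have hPlb : ∀ t ω, (∑ a ∈ Astar, σ₀ a) * (1/2)^t ≤ P t ω := by
    intro t
    induction t with
    | zero =>
      intro ω
      show _ ≤ ∑ a ∈ Astar, σ 0 a ω
      simp only [hσ_init, pow_zero, mul_one, le_refl]
    | succ t ih =>
      intro ω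
      have habs := abs_le.1 (hDabs t ω)
      have h1 : P t ω * (1/2) ≤ P (t+1) ω := by
        rw [hPrec t ω]
        have h4 : β t * (-(P t ω * (1 - P t ω))) ≤ β t * D t ω :=
          mul_le_mul_of_nonneg_left habs.1 (hβpos t).le
        nlinarith [hPnonneg t ω, hPle1 t ω, hβhalf t, (hβpos t).le,
          mul_nonneg (hPnonneg t ω) (sub_nonneg.2 (hPle1 t ω))]
      calc (∑ a ∈ Astar, σ₀ a) * (1/2)^(t+1)
          = ((∑ a ∈ Astar, σ₀ a) * (1/2)^t) * (1/2) := by ring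
        _ ≤ P t ω * (1/2) := by linarith [ih ω]
        _ ≤ P (t+1) ω := h1
  have hPpos : ∀ t ω, 0 < P t ω := fun t ω =>
    lt_of_lt_of_le (mul_pos hP0 (by positivity)) (hPlb t ω)
  -- measurability and integrability
  have hPmeas : ∀ t, Measurable[𝓕 t] (P t) := fun t =>
    Finset.measurable_sum _ fun a _ => (hσ_meas t a).measurable
  have hPmeas0 : ∀ t, Measurable (P t) := fun t => (hPmeas t).mono (𝓕.le t) le_rfl
  have hbint : ∀ (f : Ω → ℝ) (C : ℝ), Measurable f → (∀ ω, |f ω| ≤ C) →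
      Integrable f μ := by
    intro f C hf hC
    refine Integrable.mono' (integrable_const C) hf.aestronglyMeasurable
      (ae_of_all _ fun ω => ?_)
    rw [Real.norm_eq_abs]; exact hC ω
  have hσmeas0 : ∀ t a, Measurable (σ t a) := fun t a =>
    (hσ_meas t a).measurable.mono (𝓕.le t) le_rfl
  have hxmeas0 : ∀ t a, Measurable (x (t+1) a) := fun t a =>
    (hx_meas t a).measurable.mono (𝓕.le (t+1)) le_rfl
  have hDmeas : ∀ t, Measurable (D t) := by
    intro t
    apply Finset.measurable_sum
    rintro ⟨a, b⟩ _
    exact ((hσmeas0 t a).mul (hσmeas0 t b)).mul ((hxmeas0 t a).sub (hxmeas0 t b))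
  have hprodbd : ∀ t (a b : A) (ω : Ω),
      |σ t a ω * σ t b ω * (x (t+1) a ω - x (t+1) b ω)| ≤ 1 := by
    intro t a b ω
    have hxa := hx_mem t a ω
    have hxb := hx_mem t b ω
    simp only [Set.mem_Icc] at hxa hxb
    have h1 := (key t ω).1 a
    have h2 := (key t ω).1 b
    have h1' : σ t a ω ≤ 1 := by
      have := (key t ω).2
      calc σ t a ω ≤ ∑ a', σ t a' ω :=
        Finset.single_le_sum (fun a' _ => (key t ω).1 a') (Finset.mem_univ a)
      _ = 1 := this
    have h2' : σ t b ω ≤ 1 := by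
      have := (key t ω).2
      calc σ t b ω ≤ ∑ a', σ t a' ω :=
        Finset.single_le_sum (fun a' _ => (key t ω).1 a') (Finset.mem_univ b)
      _ = 1 := this
    rw [abs_mul, abs_mul, abs_of_nonneg h1, abs_of_nonneg h2]
    have hd : |x (t + 1) a ω - x (t + 1) b ω| ≤ 1 := by
      rw [abs_le]; constructor <;> linarith [hxa.1, hxa.2, hxb.1, hxb.2]
    have hσσ : σ t a ω * σ t b ω ≤ 1 := mul_le_one₀ h1' h2 h2'
    exact mul_le_one₀ hσσ (abs_nonneg _) hd
  have hDbd : ∀ t ω, |D t ω| ≤ 1 := by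
    intro t ω
    have h1 := hDabs t ω
    nlinarith [hPnonneg t ω, hPle1 t ω]
  have hDint : ∀ t, Integrable (D t) μ := fun t => hbint _ 1 (hDmeas t) (hDbd t)
  -- the truncated gap
  set ε' : Ω → ℝ := fun ω => max 0 (min (ε ω) 1) with hε'def
  have hε'nonneg : ∀ ω, 0 ≤ ε' ω := fun ω => le_max_left _ _
  have hε'le1 : ∀ ω, ε' ω ≤ 1 := fun ω => max_le (by norm_num) (min_le_right _ _)
  have hε'meas : Measurable ε' := measurable_const.max (hε_meas.min measurable_const)
  have hε'pos : ∀ᵐ ω ∂μ, 0 < ε' ω :=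
    hε_pos.mono fun ω h => lt_max_of_lt_right (lt_min h one_pos)
  -- conditional expectation lower bound
  have hDcond : ∀ t, ∀ᵐ ω ∂μ,
      ε' ω * (P t ω * (1 - P t ω)) ≤ (μ[D t|𝓕 t]) ω := by
    intro t
    have hgint : ∀ p : A × A,
        Integrable (fun ω => σ t p.1 ω * σ t p.2 ω *
          (x (t+1) p.1 ω - x (t+1) p.2 ω)) μ := by
      rintro ⟨a, b⟩
      exact hbint _ 1 (((hσmeas0 t a).mul (hσmeas0 t b)).mul
        ((hxmeas0 t a).sub (hxmeas0 t b))) (hprodbd t a b)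
    have hpair : ∀ p : A × A, p ∈ Astar ×ˢ (Finset.univ \ Astar) → ∀ᵐ ω ∂μ,
        σ t p.1 ω * σ t p.2 ω * ε' ω ≤
          (μ[fun ω => σ t p.1 ω * σ t p.2 ω *
            (x (t+1) p.1 ω - x (t+1) p.2 ω)|𝓕 t]) ω := by
      rintro ⟨a, b⟩ hp
      simp only [Finset.mem_product, Finset.mem_sdiff, Finset.mem_univ, true_and] at hp
      obtain ⟨ha, hb⟩ := hp
      have hfmeas : StronglyMeasurable[𝓕 t] (fun ω => σ t a ω * σ t b ω) :=
        (hσ_meas t a).mul (hσ_meas t b)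
      have hgint2 : Integrable (fun ω => x (t+1) a ω - x (t+1) b ω) μ :=
        (hx_int t a).sub (hx_int t b)
      have hmul := condExp_mul_of_stronglyMeasurable_left (μ := μ) hfmeas (hgint (a, b)) hgint2
      have hsub := condExp_sub (m := 𝓕 t) (μ := μ) (hx_int t a) (hx_int t b)
      filter_upwards [hmul, hsub, hgap t a ha b hb, hε_pos] with ω h1 h2 h3 h4
      have h5 : (μ[fun ω => σ t a ω * σ t b ω *
          (x (t+1) a ω - x (t+1) b ω)|𝓕 t]) ω
          = σ t a ω * σ t b ω * ((μ[x (t+1) a - x (t+1) b|𝓕 t]) ω) := h1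
      rw [h5, h2]
      simp only [Pi.sub_apply]
      have hε'le : ε' ω ≤ ε ω := max_le h4.le (min_le_left _ _)
      have hnn : 0 ≤ σ t a ω * σ t b ω :=
        mul_nonneg ((key t ω).1 a) ((key t ω).1 b)
      exact mul_le_mul_of_nonneg_left (hε'le.trans h3) hnn
    have hDeq : D t = ∑ p ∈ Astar ×ˢ (Finset.univ \ Astar),
        (fun ω => σ t p.1 ω * σ t p.2 ω * (x (t+1) p.1 ω - x (t+1) p.2 ω)) := by
      funext ω
      rw [Finset.sum_apply]
    have hsum := condExp_finsetSum (m := 𝓕 t) (μ := μ)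
      (s := Astar ×ˢ (Finset.univ \ Astar))
      (f := fun p => fun ω => σ t p.1 ω * σ t p.2 ω *
        (x (t+1) p.1 ω - x (t+1) p.2 ω)) (fun p _ => hgint p)
    have hall : ∀ᵐ ω ∂μ, ∀ p : A × A, p ∈ Astar ×ˢ (Finset.univ \ Astar) →
        σ t p.1 ω * σ t p.2 ω * ε' ω ≤
          (μ[fun ω => σ t p.1 ω * σ t p.2 ω *
            (x (t+1) p.1 ω - x (t+1) p.2 ω)|𝓕 t]) ω := by
      rw [ae_all_iff]
      intro p
      by_cases hp : p ∈ Astar ×ˢ (Finset.univ \ Astar)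
      · exact (hpair p hp).mono fun ω h _ => h
      · exact ae_of_all _ fun ω h => absurd h hp
    filter_upwards [hall, hsum] with ω h1 h2
    have h3 : (μ[D t|𝓕 t]) ω = ∑ p ∈ Astar ×ˢ (Finset.univ \ Astar),
        (μ[fun ω => σ t p.1 ω * σ t p.2 ω *
          (x (t+1) p.1 ω - x (t+1) p.2 ω)|𝓕 t]) ω := by
      rw [hDeq]
      rw [h2, Finset.sum_apply]
    rw [h3]
    calc ε' ω * (P t ω * (1 - P t ω))
        = ∑ p ∈ Astar ×ˢ (Finset.univ \ Astar),
            σ t p.1 ω * σ t p.2 ω * ε' ω := by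
          rw [← hPQ t ω, Finset.mul_sum]
          exact Finset.sum_congr rfl fun p _ => by ring
      _ ≤ _ := Finset.sum_le_sum h1
  -- the supermartingale  F t = -log P t - K t
  set K : ℕ → ℝ := fun t => 2 * ∑ s ∈ Finset.range t, (β s)^2 with hKdef
  set F : ℕ → Ω → ℝ := fun t ω => -Real.log (P t ω) - K t with hFdef
  have hK0 : ∀ t, 0 ≤ K t := fun t =>
    mul_nonneg (by norm_num) (Finset.sum_nonneg fun s _ => sq_nonneg _)
  have hlbpos : ∀ t : ℕ, (0:ℝ) < (∑ a ∈ Astar, σ₀ a) * (1/2)^t := fun t =>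
    mul_pos hP0 (by positivity)
  have hlogPbd : ∀ t ω, |Real.log (P t ω)| ≤
      |Real.log ((∑ a ∈ Astar, σ₀ a) * (1/2)^t)| := by
    intro t ω
    have h1 : Real.log ((∑ a ∈ Astar, σ₀ a) * (1/2)^t) ≤ Real.log (P t ω) :=
      Real.log_le_log (hlbpos t) (hPlb t ω)
    have h2 : Real.log (P t ω) ≤ 0 := Real.log_nonpos (hPnonneg t ω) (hPle1 t ω)
    rw [abs_le]
    constructor
    · calc -|Real.log ((∑ a ∈ Astar, σ₀ a) * (1/2)^t)|
          ≤ Real.log ((∑ a ∈ Astar, σ₀ a) * (1/2)^t) := neg_abs_le _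
        _ ≤ Real.log (P t ω) := h1
    · exact h2.trans (abs_nonneg _)
  have hlogmeas : ∀ t, Measurable[𝓕 t] fun ω => Real.log (P t ω) :=
    fun t => Real.measurable_log.comp (hPmeas t)
  have hFadp : StronglyAdapted 𝓕 F := fun t =>
    (((hlogmeas t).neg).sub measurable_const).stronglyMeasurable
  have hFbd : ∀ t ω, |F t ω| ≤ |Real.log ((∑ a ∈ Astar, σ₀ a) * (1/2)^t)| + K t := by
    intro t ω
    show |(-Real.log (P t ω)) - K t| ≤ _
    have h := abs_le.1 (hlogPbd t ω)
    have h2 := hK0 t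
    rw [abs_le]
    constructor <;> linarith [h.1, h.2]
  have hFint : ∀ t, Integrable (F t) μ := by
    intro t
    apply hbint _ (|Real.log ((∑ a ∈ Astar, σ₀ a) * (1/2)^t)| + K t)
      (((hlogmeas t).neg.sub measurable_const).mono (𝓕.le t) le_rfl)
    exact hFbd t
  -- one-step log inequality
  have hlogstep : ∀ t ω, -Real.log (P (t+1) ω)
      ≤ -Real.log (P t ω) - (β t * (P t ω)⁻¹) * D t ω + 2*(β t)^2 := by
    intro t ω
    have hPt := hPpos t ω
    set u : ℝ := β t * (P t ω)⁻¹ * D t ω with hudef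
    have huabs : |u| ≤ β t := by
      rw [hudef, abs_mul, abs_mul, abs_of_nonneg (hβpos t).le,
        abs_of_nonneg (inv_nonneg.2 hPt.le)]
      have h1 : |D t ω| ≤ P t ω :=
        (hDabs t ω).trans (by nlinarith [hPnonneg t ω, hPle1 t ω])
      calc β t * (P t ω)⁻¹ * |D t ω| ≤ β t * (P t ω)⁻¹ * P t ω :=
            mul_le_mul_of_nonneg_left h1 (by positivity)
        _ = β t := by field_simp
    have hu2 : |u| ≤ 1/2 := le_trans huabs (hβhalf t)
    have h1u : 0 < 1 + u := by have := abs_le.1 hu2; linarith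
    have hP1 : P (t+1) ω = P t ω * (1+u) := by
      rw [hPrec t ω, hudef]
      field_simp
    rw [hP1, Real.log_mul hPt.ne' h1u.ne']
    have hlg := aux_log hu2
    have hsq : u^2 ≤ (β t)^2 := by
      rw [← sq_abs u, ← sq_abs (β t)]
      exact pow_le_pow_left₀ (abs_nonneg u) (by rwa [abs_of_nonneg (hβpos t).le]) 2
    linarith
  -- one-step conditional expectation inequality
  have hstep : ∀ t, μ[F (t+1)|𝓕 t] ≤ᵐ[μ]
      fun ω => F t ω - β t * (ε' ω * (1 - P t ω)) := by
    intro t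
    set g : Ω → ℝ := fun ω => β t * (P t ω)⁻¹ with hgdef
    have hgmeas : StronglyMeasurable[𝓕 t] g :=
      ((hPmeas t).inv.const_mul (β t)).stronglyMeasurable
    have hgbd : ∀ ω, 0 ≤ g ω ∧ g ω ≤ β t / ((∑ a ∈ Astar, σ₀ a) * (1/2)^t) := by
      intro ω
      constructor
      · exact mul_nonneg (hβpos t).le (inv_nonneg.2 (hPpos t ω).le)
      · show β t * (P t ω)⁻¹ ≤ _
        rw [div_eq_mul_inv]
        apply mul_le_mul_of_nonneg_left _ (hβpos t).le
        exact inv_anti₀ (hlbpos t) (hPlb t ω)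
    have hgDint : Integrable (g * D t) μ := by
      apply hbint _ ((β t / ((∑ a ∈ Astar, σ₀ a) * (1/2)^t)) * 1)
        ((((hPmeas0 t).inv.const_mul (β t))).mul (hDmeas t))
      intro ω
      show |g ω * D t ω| ≤ _
      rw [abs_mul]
      apply mul_le_mul ((abs_of_nonneg (hgbd ω).1).trans_le (hgbd ω).2)
        (hDbd t ω) (abs_nonneg _)
      positivity
    have hpt : F (t+1) ≤ᵐ[μ] F t - g * D t := by
      apply ae_of_all
      intro ω
      have h := hlogstep t ω
      have hK : K (t+1) = K t + 2*(β t)^2 := by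
        show 2 * ∑ s ∈ Finset.range (t+1), (β s)^2 = _
        rw [Finset.sum_range_succ]
        show _ = 2 * ∑ s ∈ Finset.range t, (β s)^2 + 2*(β t)^2
        ring
      show -Real.log (P (t+1) ω) - K (t+1) ≤
        (-Real.log (P t ω) - K t) - (β t * (P t ω)⁻¹) * D t ω
      rw [hK]
      linarith
    have h1 : μ[F (t+1)|𝓕 t] ≤ᵐ[μ] μ[F t - g * D t|𝓕 t] :=
      condExp_mono (hFint (t+1)) ((hFint t).sub hgDint) hpt
    have h2 : μ[F t - g * D t|𝓕 t] =ᵐ[μ] μ[F t|𝓕 t] - μ[g * D t|𝓕 t] :=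
      condExp_sub (hFint t) hgDint _
    have h3 : μ[F t|𝓕 t] = F t :=
      condExp_of_stronglyMeasurable (𝓕.le t) (hFadp t) (hFint t)
    have h4 : μ[g * D t|𝓕 t] =ᵐ[μ] g * μ[D t|𝓕 t] :=
      condExp_mul_of_stronglyMeasurable_left hgmeas hgDint (hDint t)
    filter_upwards [h1, h2, h4, hDcond t] with ω e1 e2 e4 e3
    have hg0 : 0 ≤ g ω := (hgbd ω).1
    have h5 : β t * (ε' ω * (1 - P t ω)) ≤ g ω * (μ[D t|𝓕 t]) ω := by
      have h6 : g ω * (ε' ω * (P t ω * (1 - P t ω))) ≤ g ω * (μ[D t|𝓕 t]) ω :=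
        mul_le_mul_of_nonneg_left e3 hg0
      have h7 : g ω * (ε' ω * (P t ω * (1 - P t ω))) = β t * (ε' ω * (1 - P t ω)) := by
        have hPne : P t ω ≠ 0 := (hPpos t ω).ne'
        show (β t * (P t ω)⁻¹) * _ = _
        calc (β t * (P t ω)⁻¹) * (ε' ω * (P t ω * (1 - P t ω)))
            = (β t * (ε' ω * (1 - P t ω))) * ((P t ω)⁻¹ * P t ω) := by ring
          _ = β t * (ε' ω * (1 - P t ω)) := by rw [inv_mul_cancel₀ hPne, mul_one]
      linarith
    calc (μ[F (t+1)|𝓕 t]) ω ≤ (μ[F t - g * D t|𝓕 t]) ω := e1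
      _ = (μ[F t|𝓕 t]) ω - (μ[g * D t|𝓕 t]) ω := e2
      _ = F t ω - (g * μ[D t|𝓕 t]) ω := by rw [h3, e4]
      _ = F t ω - g ω * (μ[D t|𝓕 t]) ω := rfl
      _ ≤ F t ω - β t * (ε' ω * (1 - P t ω)) := by linarith
  have hsuper : Supermartingale F 𝓕 μ := by
    apply supermartingale_nat hFadp hFint
    intro t
    refine (hstep t).trans (ae_of_all _ fun ω => ?_)
    have : 0 ≤ β t * (ε' ω * (1 - P t ω)) :=
      mul_nonneg (hβpos t).le (mul_nonneg (hε'nonneg ω)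
        (by linarith [hPle1 t ω]))
    show F t ω - β t * (ε' ω * (1 - P t ω)) ≤ F t ω
    linarith
  -- summability of β²
  have hBsum : Summable (fun s => (β s)^2) := by
    have h1 : Summable (fun n : ℕ => 1 / ((n:ℝ))^2) :=
      Real.summable_one_div_nat_pow.2 one_lt_two
    have h2 : Summable (fun n : ℕ => 1 / (((n+2:ℕ)):ℝ)^2) :=
      (summable_nat_add_iff (f := fun n : ℕ => 1 / ((n:ℝ))^2) 2).2 h1
    apply Summable.of_nonneg_of_le (fun s => sq_nonneg _) (fun s => ?_)
      (h2.mul_left (c^2))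
    show (c / ((s:ℝ)+2))^2 ≤ c^2 * (1 / (((s+2:ℕ)):ℝ)^2)
    have : (((s+2:ℕ)):ℝ) = (s:ℝ) + 2 := by push_cast; ring
    rw [this, div_pow]
    rw [div_eq_mul_inv, mul_one_div, div_eq_mul_inv]
  set B : ℝ := ∑' s, (β s)^2 with hBdef
  have hB0 : 0 ≤ B := tsum_nonneg fun s => sq_nonneg _
  have hKle : ∀ t, K t ≤ 2*B := by
    intro t
    have := Summable.sum_le_tsum (Finset.range t) (fun s _ => sq_nonneg (β s)) hBsum
    show 2 * ∑ s ∈ Finset.range t, (β s)^2 ≤ 2*B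
    linarith
  have hFlb : ∀ t ω, -(2*B) ≤ F t ω := by
    intro t ω
    show -(2*B) ≤ -Real.log (P t ω) - K t
    have h1 : Real.log (P t ω) ≤ 0 := Real.log_nonpos (hPnonneg t ω) (hPle1 t ω)
    linarith [hKle t]
  -- L¹ bound and a.s. convergence of F
  have hEF : ∀ t, ∫ ω, F t ω ∂μ ≤ ∫ ω, F 0 ω ∂μ := by
    intro t
    have h := hsuper.2.1 0 t (Nat.zero_le t)
    calc ∫ ω, F t ω ∂μ = ∫ ω, (μ[F t|𝓕 0]) ω ∂μ :=
        (integral_condExp (𝓕.le 0)).symm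
      _ ≤ ∫ ω, F 0 ω ∂μ := integral_mono_ae integrable_condExp (hFint 0) h
  have hsnorm : ∀ t, eLpNorm (F t) 1 μ ≤ ENNReal.ofReal (∫ ω, F 0 ω ∂μ + 4*B) := by
    intro t
    have h2 : ∀ ω, |F t ω| ≤ F t ω + 4*B := by
      intro ω
      have := hFlb t ω
      rw [abs_le]
      constructor <;> linarith
    have h1 : ∫ ω, |F t ω| ∂μ ≤ ∫ ω, F 0 ω ∂μ + 4*B := by
      calc ∫ ω, |F t ω| ∂μ ≤ ∫ ω, (F t ω + 4*B) ∂μ :=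
            integral_mono (hFint t).abs ((hFint t).add (integrable_const _)) h2
        _ = ∫ ω, F t ω ∂μ + 4*B := by
            rw [integral_add (hFint t) (integrable_const _)]
            simp [measure_univ]
        _ ≤ ∫ ω, F 0 ω ∂μ + 4*B := by linarith [hEF t]
    rw [eLpNorm_one_eq_lintegral_enorm,
      ← ofReal_integral_norm_eq_lintegral_enorm (hFint t)]
    apply ENNReal.ofReal_le_ofReal
    simpa [Real.norm_eq_abs] using h1
  have hconv : ∀ᵐ ω ∂μ, ∃ L, Tendsto (fun t => F t ω) atTop (𝓝 L) := by
    have hsub : Submartingale (-F) 𝓕 μ := hsuper.neg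
    have hbdd : ∀ n, eLpNorm ((-F) n) 1 μ ≤
        (ENNReal.ofReal (∫ ω, F 0 ω ∂μ + 4*B)).toNNReal := by
      intro n
      have : (-F) n = -(F n) := rfl
      rw [this, eLpNorm_neg]
      calc eLpNorm (F n) 1 μ ≤ ENNReal.ofReal (∫ ω, F 0 ω ∂μ + 4*B) := hsnorm n
        _ = (ENNReal.ofReal (∫ ω, F 0 ω ∂μ + 4*B)).toNNReal := by
            rw [ENNReal.coe_toNNReal ENNReal.ofReal_ne_top]
    have := hsub.exists_ae_tendsto_of_bdd hbdd
    filter_upwards [this] with ω hω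
    obtain ⟨L, hL⟩ := hω
    exact ⟨-L, by simpa using hL.neg⟩
  -- telescoping sum of drifts
  have hbint' : ∀ t, Integrable (fun ω => ε' ω * (1 - P t ω)) μ := by
    intro t
    apply hbint _ 1 (hε'meas.mul (measurable_const.sub (hPmeas0 t)))
    intro ω
    show |ε' ω * (1 - P t ω)| ≤ 1
    rw [abs_mul, abs_of_nonneg (hε'nonneg ω),
      abs_of_nonneg (by linarith [hPle1 t ω] : (0:ℝ) ≤ 1 - P t ω)]
    have := hPnonneg t ω
    nlinarith [hε'le1 ω, hε'nonneg ω, hPle1 t ω]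
  have hbnonneg : ∀ t, 0 ≤ ∫ ω, ε' ω * (1 - P t ω) ∂μ := fun t =>
    integral_nonneg fun ω => mul_nonneg (hε'nonneg ω) (by linarith [hPle1 t ω])
  have htel : ∀ t, β t * ∫ ω, ε' ω * (1 - P t ω) ∂μ
      ≤ (∫ ω, F t ω ∂μ) - ∫ ω, F (t+1) ω ∂μ := by
    intro t
    have h1 : ∫ ω, F (t+1) ω ∂μ = ∫ ω, (μ[F (t+1)|𝓕 t]) ω ∂μ :=
      (integral_condExp (𝓕.le t)).symm
    have h2 : ∫ ω, (μ[F (t+1)|𝓕 t]) ω ∂μ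
        ≤ ∫ ω, (F t ω - β t * (ε' ω * (1 - P t ω))) ∂μ :=
      integral_mono_ae integrable_condExp
        ((hFint t).sub ((hbint' t).const_mul (β t))) (hstep t)
    rw [integral_sub (hFint t) ((hbint' t).const_mul (β t)),
      integral_const_mul] at h2
    linarith
  have hsummable : Summable (fun t => β t * ∫ ω, ε' ω * (1 - P t ω) ∂μ) := by
    apply summable_of_sum_range_le
      (c := ∫ ω, F 0 ω ∂μ + 2*B)
      (fun t => mul_nonneg (hβpos t).le (hbnonneg t))
    intro n
    have h1 : ∑ t ∈ Finset.range n, (β t * ∫ ω, ε' ω * (1 - P t ω) ∂μ)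
        ≤ ∑ t ∈ Finset.range n, ((∫ ω, F t ω ∂μ) - ∫ ω, F (t+1) ω ∂μ) :=
      Finset.sum_le_sum fun t _ => htel t
    rw [Finset.sum_range_sub' (fun t => ∫ ω, F t ω ∂μ)] at h1
    have hIlb : -(2*B) ≤ ∫ ω, F n ω ∂μ := by
      have := integral_mono (integrable_const (-(2*B))) (hFint n)
        (fun ω => hFlb n ω)
      simpa [measure_univ] using this
    linarith
  -- infinitely often small drift
  have hnotsumβ : ¬ Summable β := by
    intro hs
    have h2 : Summable (fun t : ℕ => ((t:ℝ)+2)⁻¹) := by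
      have h3 := hs.mul_left c⁻¹
      apply Summable.congr h3
      intro t
      show c⁻¹ * (c / ((t:ℝ)+2)) = _
      field_simp
    have h4 : Summable (fun t : ℕ => (((t+2:ℕ)):ℝ)⁻¹) := by
      apply Summable.congr h2
      intro t
      congr 1
      push_cast
      ring
    have h5 : Summable (fun n : ℕ => ((n:ℝ))⁻¹) :=
      (summable_nat_add_iff (f := fun n : ℕ => ((n:ℝ))⁻¹) 2).1 h4
    exact Real.not_summable_natCast_inv h5
  have hfreq : ∀ δ : ℝ, 0 < δ →
      ∃ᶠ t in atTop, (∫ ω, ε' ω * (1 - P t ω) ∂μ) < δ := by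
    intro δ hδ
    by_contra hcon
    rw [not_frequently] at hcon
    rw [eventually_atTop] at hcon
    obtain ⟨N, hN⟩ := hcon
    have hsumβ' : Summable (fun t => β (t + N)) := by
      have h1 : Summable (fun t => δ⁻¹ * (β (t+N) * ∫ ω, ε' ω * (1 - P (t+N) ω) ∂μ)) :=
        ((summable_nat_add_iff
          (f := fun t => β t * ∫ ω, ε' ω * (1 - P t ω) ∂μ) N).2 hsummable).mul_left δ⁻¹
      apply Summable.of_nonneg_of_le (fun t => (hβpos _).le) (fun t => ?_) h1
      have hb := not_lt.1 (hN (t+N) (Nat.le_add_left N t))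
      have h2 : β (t+N) * δ ≤ β (t+N) * ∫ ω, ε' ω * (1 - P (t+N) ω) ∂μ :=
        mul_le_mul_of_nonneg_left hb (hβpos (t+N)).le
      calc β (t+N) = δ⁻¹ * (β (t+N) * δ) := by field_simp
        _ ≤ δ⁻¹ * (β (t+N) * ∫ ω, ε' ω * (1 - P (t+N) ω) ∂μ) :=
          mul_le_mul_of_nonneg_left h2 (inv_nonneg.2 hδ.le)
    exact hnotsumβ ((summable_nat_add_iff (f := β) N).1 hsumβ')
  -- Fatou argument
  have hGmeas : ∀ t, Measurable (fun ω => ENNReal.ofReal (ε' ω * (1 - P t ω))) :=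
    fun t => ENNReal.measurable_ofReal.comp
      (hε'meas.mul (measurable_const.sub (hPmeas0 t)))
  have hlinteq : ∀ t, ∫⁻ ω, ENNReal.ofReal (ε' ω * (1 - P t ω)) ∂μ
      = ENNReal.ofReal (∫ ω, ε' ω * (1 - P t ω) ∂μ) := by
    intro t
    rw [← ofReal_integral_eq_lintegral_ofReal (hbint' t)
      (ae_of_all _ fun ω => mul_nonneg (hε'nonneg ω) (by linarith [hPle1 t ω]))]
  have hliminf0 : liminf
      (fun t => ∫⁻ ω, ENNReal.ofReal (ε' ω * (1 - P t ω)) ∂μ) atTop = 0 := by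
    apply le_antisymm _ zero_le
    have hle : ∀ n : ℕ, liminf
        (fun t => ∫⁻ ω, ENNReal.ofReal (ε' ω * (1 - P t ω)) ∂μ) atTop
        ≤ ENNReal.ofReal (1/((n:ℝ)+1)) := by
      intro n
      apply liminf_le_of_frequently_le'
      apply (hfreq (1/((n:ℝ)+1)) (by positivity)).mono
      intro t ht
      rw [hlinteq t]
      exact ENNReal.ofReal_le_ofReal ht.le
    have htd : Tendsto (fun n : ℕ => ENNReal.ofReal (1/((n:ℝ)+1))) atTop (𝓝 0) := by
      have := ENNReal.tendsto_ofReal (tendsto_one_div_add_atTop_nhds_zero_nat)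
      simpa using this
    exact ge_of_tendsto' htd hle
  have hae0 : ∀ᵐ ω ∂μ, liminf
      (fun t => ENNReal.ofReal (ε' ω * (1 - P t ω))) atTop = 0 := by
    have h1 : ∫⁻ ω, liminf (fun t => ENNReal.ofReal (ε' ω * (1 - P t ω))) atTop ∂μ = 0 := by
      apply le_antisymm _ zero_le
      calc ∫⁻ ω, liminf (fun t => ENNReal.ofReal (ε' ω * (1 - P t ω))) atTop ∂μ
          ≤ liminf (fun t => ∫⁻ ω, ENNReal.ofReal (ε' ω * (1 - P t ω)) ∂μ) atTop :=
            lintegral_liminf_le hGmeas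
        _ = 0 := hliminf0
    have h2 := (lintegral_eq_zero_iff (Measurable.liminf hGmeas)).1 h1
    filter_upwards [h2] with ω hω
    exact hω
  -- conclusion
  have hKt : Tendsto K atTop (𝓝 (2*B)) := by
    have := hBsum.hasSum.tendsto_sum_nat
    have h2 := this.const_mul (2:ℝ)
    exact h2
  filter_upwards [hconv, hae0, hε_pos] with ω hc1 hc2 hc3
  obtain ⟨L, hL⟩ := hc1
  have hlogconv : Tendsto (fun t => Real.log (P t ω)) atTop (𝓝 (-(L + 2*B))) := by
    have h1 : Tendsto (fun t => -(F t ω + K t)) atTop (𝓝 (-(L + 2*B))) :=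
      (hL.add hKt).neg
    apply h1.congr
    intro t
    show -(F t ω + K t) = _
    show -((-Real.log (P t ω) - K t) + K t) = _
    ring
  have hPconv : Tendsto (fun t => P t ω) atTop (𝓝 (Real.exp (-(L + 2*B)))) := by
    have h1 : Tendsto (fun t => Real.exp (Real.log (P t ω))) atTop
        (𝓝 (Real.exp (-(L + 2*B)))) :=
      (Real.continuous_exp.tendsto _).comp hlogconv
    apply h1.congr
    intro t
    rw [Real.exp_log (hPpos t ω)]
  set ℓ : ℝ := Real.exp (-(L + 2*B)) with hldef
  have hl1 : ℓ ≤ 1 := le_of_tendsto hPconv (Eventually.of_forall fun t => hPle1 t ω)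
  have hεl : ε' ω * (1 - ℓ) ≤ 0 := by
    have htG : Tendsto (fun t => ENNReal.ofReal (ε' ω * (1 - P t ω))) atTop
        (𝓝 (ENNReal.ofReal (ε' ω * (1 - ℓ)))) := by
      apply (ENNReal.continuous_ofReal.tendsto _).comp
      exact (tendsto_const_nhds.sub hPconv).const_mul (ε' ω)
    have h1 := htG.liminf_eq
    rw [hc2] at h1
    exact ENNReal.ofReal_eq_zero.1 h1.symm
  have hε'ω : 0 < ε' ω := lt_max_of_lt_right (lt_min hc3 one_pos)
  have hl2 : ℓ = 1 := by nlinarith [hεl, hε'ω, hl1]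
  show Tendsto (fun t => P t ω) atTop (𝓝 1)
  rw [← hl2]
  exact hPconv
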